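/- arXiv:1704.03166 — 2 statements merged into one kernel-verified Lean document; each statement's English description precedes it below -/
import Mathlib

section
/- For any two nonzero scalars c₁, c₂ ∈ F_p, the element c₁·(βP^0 ⊗ P^0β) + c₂·(P^0β ⊗ βP^0) of the tensor product of F_p-vector spaces B(p) ⊗_{F_p} B(p) is nonzero. -/
open scoped TensorProduct

noncomputable section

namespace BpOps

/-- Generators of `B(p)`: the Bockstein `β` and the Steenrod powers `P^k`. -/
inductive Gen : Type
  | beta : Gen
  | pw : ℕ → Gen

abbrev F (p : ℕ) := ZMod p

/-- Binomial coefficient `C(m,n)` for integers, with the convention that it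
vanishes unless `0 ≤ n ≤ m`. -/
def binc (m n : ℤ) : ℤ := if 0 ≤ n ∧ n ≤ m then (m.toNat).choose n.toNat else 0

/-- The coefficient `A(k,r,j) = (-1)^(r+j) C((p-1)(k-j)-1, r-pj)` in `F_p`. -/
def Ac (p k r j : ℕ) : F p :=
  (((-1 : ℤ) ^ (r + j) *
      binc (((p : ℤ) - 1) * ((k : ℤ) - (j : ℤ)) - 1) ((r : ℤ) - (p : ℤ) * (j : ℤ))) : ℤ)

/-- The coefficient `B(k,r,j) = (-1)^(r+j) C((p-1)(k-j), r-pj)` in `F_p`. -/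
def Bc (p k r j : ℕ) : F p :=
  (((-1 : ℤ) ^ (r + j) *
      binc (((p : ℤ) - 1) * ((k : ℤ) - (j : ℤ))) ((r : ℤ) - (p : ℤ) * (j : ℤ))) : ℤ)

abbrev FA (p : ℕ) := FreeAlgebra (F p) Gen

def fβ (p : ℕ) : FA p := FreeAlgebra.ι (F p) Gen.beta
def fP (p : ℕ) (k : ℕ) : FA p := FreeAlgebra.ι (F p) (Gen.pw k)

/-- The defining relations (R1), (R2), (R3) of `B(p)`. -/
inductive BRel (p : ℕ) : FA p → FA p → Prop
  | betaSq : BRel p (fβ p * fβ p) 0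
  | adem (a b : ℕ) (h : a < p * b) :
      BRel p (fP p a * fP p b)
        (∑ t ∈ Finset.range (a / p + 1), Ac p b a t • (fP p (a + b - t) * fP p t))
  | ademBeta (a b : ℕ) (h : a ≤ p * b) :
      BRel p (fP p a * (fβ p * fP p b))
        (∑ t ∈ Finset.range (a / p + 1), Bc p b a t • (fβ p * (fP p (a + b - t) * fP p t))
          + ∑ t ∈ Finset.range (if a = 0 then 0 else (a - 1) / p + 1),
              Ac p b (a - 1) t • (fP p (a + b - t) * (fβ p * fP p t)))

/-- The algebra `B(p)` of operations for Hopf cohomology, presented by generators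
`β`, `P^k` and the relations (R1)-(R3). -/
abbrev BAlg (p : ℕ) := RingQuot (BRel p)

/-- The Bockstein `β` as an element of `B(p)`. -/
def gβ (p : ℕ) : BAlg p := RingQuot.mkAlgHom (F p) (BRel p) (fβ p)

/-- The Steenrod power `P^k` as an element of `B(p)`. -/
def gP (p : ℕ) (k : ℕ) : BAlg p := RingQuot.mkAlgHom (F p) (BRel p) (fP p k)

end BpOps

namespace BpAux

open BpOps Matrix

variable (p : ℕ)

/-- The image of `β`: `E₀₁ + E₂₃`. -/
def bm : Matrix (Fin 4) (Fin 4) (F p) := Matrix.single 0 1 1 + Matrix.single 2 3 1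

/-- The image of `P⁰`: `diag(1,0,1,1)`. -/
def qm : Matrix (Fin 4) (Fin 4) (F p) := diagonal ![1, 0, 1, 1]

def genMap : Gen → Matrix (Fin 4) (Fin 4) (F p)
  | .beta => bm p
  | .pw 0 => qm p
  | .pw (_ + 1) => 0

def liftF : FA p →ₐ[F p] Matrix (Fin 4) (Fin 4) (F p) :=
  FreeAlgebra.lift (F p) (genMap p)

lemma liftF_beta : liftF p (fβ p) = bm p := by
  simp [liftF, fβ, genMap]

lemma liftF_pw0 : liftF p (fP p 0) = qm p := by
  simp [liftF, fP, genMap]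

lemma liftF_pw_pos {k : ℕ} (hk : k ≠ 0) : liftF p (fP p k) = 0 := by
  obtain ⟨m, rfl⟩ := Nat.exists_eq_succ_of_ne_zero hk
  simp [liftF, fP, genMap]

lemma bm_sq : bm p * bm p = 0 := by
  ext i j
  fin_cases i <;> fin_cases j <;>
    simp [bm, Matrix.mul_apply, Fin.sum_univ_four, Matrix.single]

lemma qbq : qm p * (bm p * qm p) = bm p * (qm p * qm p) := by
  ext i j
  fin_cases i <;> fin_cases j <;>
    simp [bm, qm, Matrix.mul_apply, Fin.sum_univ_four, Matrix.single,
      Matrix.diagonal]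

lemma Bc_zero : Bc p 0 0 0 = 1 := by
  simp [Bc, binc]

lemma rel_preserved : ∀ ⦃x y : FA p⦄, BRel p x y → liftF p x = liftF p y := by
  intro x y h
  cases h with
  | betaSq =>
      rw [_root_.map_mul, liftF_beta, _root_.map_zero, bm_sq]
  | adem a b h =>
      have hb : b ≠ 0 := by rintro rfl; simp at h
      rw [_root_.map_mul, liftF_pw_pos p hb, mul_zero, _root_.map_sum]
      refine (Finset.sum_eq_zero fun t ht => ?_).symm
      have ht' : t ≤ a := le_trans (Nat.lt_succ_iff.mp (Finset.mem_range.mp ht))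
        (Nat.div_le_self a p)
      have habt : a + b - t ≠ 0 := by omega
      rw [_root_.map_smul, _root_.map_mul, liftF_pw_pos p habt, zero_mul, smul_zero]
  | ademBeta a b h =>
      rcases Nat.eq_zero_or_pos b with rfl | hb
      · have ha : a = 0 := by omega
        subst ha
        rw [show (if (0:ℕ) = 0 then 0 else (0 - 1) / p + 1) = 0 from rfl]
        simp only [Nat.zero_div, zero_add, Finset.range_zero,
          Finset.sum_empty, add_zero, Finset.sum_range_one, Nat.sub_zero]
        rw [_root_.map_mul, _root_.map_mul, liftF_pw0, liftF_beta, _root_.map_smul,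
          _root_.map_mul, _root_.map_mul, liftF_beta, liftF_pw0, Bc_zero, one_smul]
        exact qbq p
      · have hb' : b ≠ 0 := hb.ne'
        rw [_root_.map_mul, _root_.map_mul, liftF_pw_pos p hb', mul_zero, mul_zero, _root_.map_add,
          _root_.map_sum, _root_.map_sum]
        have h1 : ∀ t ∈ Finset.range (a / p + 1),
            liftF p (Bc p b a t • (fβ p * (fP p (a + b - t) * fP p t))) = 0 := by
          intro t ht
          have ht' : t ≤ a := le_trans (Nat.lt_succ_iff.mp (Finset.mem_range.mp ht))
            (Nat.div_le_self a p)
          have habt : a + b - t ≠ 0 := by omega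
          rw [_root_.map_smul, _root_.map_mul, _root_.map_mul, liftF_pw_pos p habt, zero_mul, mul_zero,
            smul_zero]
        have h2 : ∀ t ∈ Finset.range (if a = 0 then 0 else (a - 1) / p + 1),
            liftF p (Ac p b (a - 1) t • (fP p (a + b - t) * (fβ p * fP p t))) = 0 := by
          intro t ht
          have habt : a + b - t ≠ 0 := by
            rcases Nat.eq_zero_or_pos a with rfl | ha
            · simp at ht
            · rw [if_neg ha.ne'] at ht
              have := le_trans (Nat.lt_succ_iff.mp (Finset.mem_range.mp ht))
                (Nat.div_le_self (a - 1) p)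
              omega
          rw [_root_.map_smul, _root_.map_mul, liftF_pw_pos p habt, zero_mul, smul_zero]
        rw [Finset.sum_eq_zero h1, Finset.sum_eq_zero h2, add_zero]

/-- The representation `B(p) → M₄(F_p)`. -/
def rep : BAlg p →ₐ[F p] Matrix (Fin 4) (Fin 4) (F p) :=
  RingQuot.liftAlgHom (F p) ⟨liftF p, rel_preserved p⟩

lemma rep_beta : rep p (gβ p) = bm p := by
  rw [rep, gβ, RingQuot.liftAlgHom_mkAlgHom_apply]
  exact liftF_beta p

lemma rep_pw0 : rep p (gP p 0) = qm p := by
  rw [rep, gP, RingQuot.liftAlgHom_mkAlgHom_apply]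
  exact liftF_pw0 p

/-- Entry functional of a matrix. -/
def entryLM (i j : Fin 4) : Matrix (Fin 4) (Fin 4) (F p) →ₗ[F p] F p where
  toFun M := M i j
  map_add' _ _ := rfl
  map_smul' _ _ := rfl

@[simp] lemma entryLM_apply (i j : Fin 4) (M : Matrix (Fin 4) (Fin 4) (F p)) :
    entryLM p i j M = M i j := rfl

end BpAux

open BpOps in
/-- For nonzero scalars `c₁, c₂`, the element
`c₁ • (βP⁰ ⊗ P⁰β) + c₂ • (P⁰β ⊗ βP⁰)` of `B(p) ⊗ B(p)` is nonzero. -/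
theorem tensor_combination_ne_zero (p : ℕ) (hp : p.Prime) (hodd : Odd p)
    (c₁ c₂ : F p) (hc₁ : c₁ ≠ 0) (hc₂ : c₂ ≠ 0) :
    c₁ • ((gβ p * gP p 0) ⊗ₜ[F p] (gP p 0 * gβ p)) +
      c₂ • ((gP p 0 * gβ p) ⊗ₜ[F p] (gβ p * gP p 0)) ≠
      (0 : BAlg p ⊗[F p] BAlg p) := by
  intro h
  apply hc₂
  have hx : BpAux.rep p (gβ p * gP p 0) = BpAux.bm p * BpAux.qm p := by
    rw [_root_.map_mul, BpAux.rep_beta, BpAux.rep_pw0]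
  have hy : BpAux.rep p (gP p 0 * gβ p) = BpAux.qm p * BpAux.bm p := by
    rw [_root_.map_mul, BpAux.rep_beta, BpAux.rep_pw0]
  set L1 : BAlg p →ₗ[F p] F p :=
    (BpAux.entryLM p 0 1) ∘ₗ (BpAux.rep p).toLinearMap with hL1
  set L2 : BAlg p →ₗ[F p] F p :=
    (BpAux.entryLM p 2 3) ∘ₗ (BpAux.rep p).toLinearMap with hL2
  set Ψ : BAlg p ⊗[F p] BAlg p →ₗ[F p] F p :=
    (TensorProduct.lid (F p) (F p)).toLinearMap ∘ₗ TensorProduct.map L1 L2 with hΨ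
  have key := congrArg Ψ h
  rw [_root_.map_add, _root_.map_smul, _root_.map_smul, _root_.map_zero] at key
  have hL1x : L1 (gβ p * gP p 0) = 0 := by
    simp only [hL1, LinearMap.comp_apply, AlgHom.toLinearMap_apply, hx]
    simp [BpAux.entryLM_apply, BpAux.bm, BpAux.qm, Matrix.mul_apply, Fin.sum_univ_four,
      Matrix.single, Matrix.diagonal]
  have hL1y : L1 (gP p 0 * gβ p) = 1 := by
    simp only [hL1, LinearMap.comp_apply, AlgHom.toLinearMap_apply, hy]
    simp [BpAux.entryLM_apply, BpAux.bm, BpAux.qm, Matrix.mul_apply, Fin.sum_univ_four,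
      Matrix.single, Matrix.diagonal]
  have hL2x : L2 (gβ p * gP p 0) = 1 := by
    simp only [hL2, LinearMap.comp_apply, AlgHom.toLinearMap_apply, hx]
    simp [BpAux.entryLM_apply, BpAux.bm, BpAux.qm, Matrix.mul_apply, Fin.sum_univ_four,
      Matrix.single, Matrix.diagonal]
  have hΨ1 : Ψ ((gβ p * gP p 0) ⊗ₜ[F p] (gP p 0 * gβ p)) = 0 := by
    simp [hΨ, hL1x]
  have hΨ2 : Ψ ((gP p 0 * gβ p) ⊗ₜ[F p] (gβ p * gP p 0)) = 1 := by
    simp [hΨ, hL1y, hL2x]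
  rw [hΨ1, hΨ2, smul_zero, zero_add, smul_eq_mul, mul_one] at key
  exact key
end
end

section
/- In B(p), the generator P^0 is not equal to the multiplicative identity 1. -/
open scoped TensorProduct

noncomputable section

open BpOps in
/-- In `B(p)`, the generator `P^0` is not the multiplicative identity. -/
theorem P_zero_ne_one (p : ℕ) (hp : p.Prime) (hodd : Odd p) :
    gP p 0 ≠ (1 : BAlg p) := by
  haveI := Fact.mk hp
  intro h
  let f : FA p →ₐ[F p] F p := FreeAlgebra.lift (F p) (fun _ => 0)
  have hrel : ∀ ⦃x y : FA p⦄, BRel p x y → f x = f y := by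
    intro x y hxy
    induction hxy with
    | betaSq => simp [f, fβ]
    | adem a b hab => simp [f, fP]
    | ademBeta a b hab => simp [f, fP, fβ]
  let g := RingQuot.liftAlgHom (F p) (s := BRel p) ⟨f, hrel⟩
  have h0 : g (gP p 0) = 0 := by
    simp [g, gP, RingQuot.liftAlgHom_mkAlgHom_apply, f, fP]
  rw [h] at h0
  simp at h0
end
end
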